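/- Let θ>0 and β<2 with β≠0, and let X have the generalized Pareto distribution GPD(θ,β) with survival function F̄(x)=(1+βx/θ)^{−1/β} and hazard rate h_F(t)=f(t;θ,β)/F̄(t). Then for every t in the interior of the support, the product J_s(X;t)·h_F(t) equals the constant 1/(2(β−2)). In particular h_F(t)=1/(θ+βt). -/

import Mathlib

open MeasureTheory Set

private lemma gpd_hasDerivAt (θ β : ℝ) (hθ : θ ≠ 0) (hβ0 : β ≠ 0) (hβ2 : β ≠ 2) (x : ℝ)
    (h : (1 + β * x / θ) ≠ 0 ∨ 1 ≤ 1 - 2 / β) :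
    HasDerivAt (fun y => θ / (β - 2) * (1 + β * y / θ) ^ (1 - 2 / β))
      ((1 + β * x / θ) ^ (-2 / β)) x := by
  have hu : HasDerivAt (fun y : ℝ => 1 + β * y / θ) (β / θ) x := by
    simpa using (((hasDerivAt_id x).const_mul β).div_const θ).const_add 1
  have h2 := (Real.hasDerivAt_rpow_const (p := 1 - 2 / β) h).comp x hu
  have h3 := h2.const_mul (θ / (β - 2))
  refine h3.congr_deriv ?_
  have hexp : (1 : ℝ) - 2 / β - 1 = -2 / β := by ring
  rw [hexp]
  have hb2 : β - 2 ≠ 0 := sub_ne_zero.mpr hβ2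
  generalize (1 + β * x / θ) ^ (-2 / β) = U
  field_simp

/-- **The product of dynamic survival extropy and hazard rate is constant for the GPD.**
For `θ > 0`, `β < 2`, `β ≠ 0`, the GPD with survival function `F̄(x) = (1+βx/θ)^(-1/β)`
and density `f(x) = (1/θ)(1+βx/θ)^(-1/β-1)` has hazard rate `h_F(t) = f(t)/F̄(t) = 1/(θ+βt)`
on the interior of the support, and the product `J_s(X;t)·h_F(t)` equals the constant
`1/(2(β-2))`, where `J_s(X;t) = -(1/2)∫_t^sup (F̄(x)/F̄(t))² dx` (the upper limit being
`∞` when `β > 0` and `-θ/β` when `β < 0`). -/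
theorem gpd_extropy_hazard_product_constant (θ β t : ℝ) (hθ : 0 < θ) (hβ2 : β < 2)
    (hβ0 : β ≠ 0) (ht : 0 < t) (ht' : β < 0 → t < -θ / β) :
    ((1 / θ) * (1 + β * t / θ) ^ (-1 / β - 1)) / (1 + β * t / θ) ^ (-1 / β) =
        1 / (θ + β * t) ∧
      (-(1 / 2) * ∫ x in (if 0 < β then Ioi t else Ioo t (-θ / β)),
            ((1 + β * x / θ) ^ (-1 / β) / (1 + β * t / θ) ^ (-1 / β)) ^ 2) *
          (((1 / θ) * (1 + β * t / θ) ^ (-1 / β - 1)) / (1 + β * t / θ) ^ (-1 / β)) =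
        1 / (2 * (β - 2)) := by
  have hβ2' : β ≠ 2 := ne_of_lt hβ2
  have hb2 : β - 2 ≠ 0 := sub_ne_zero.mpr hβ2'
  set a : ℝ := 1 + β * t / θ with ha_def
  -- positivity of θ + β t and of a
  have hθβt : 0 < θ + β * t := by
    rcases lt_or_gt_of_ne hβ0 with hneg | hpos
    · have h1 := ht' hneg
      have h2 : β * t > β * (-θ / β) := (mul_lt_mul_left_of_neg hneg).mpr h1
      have h3 : β * (-θ / β) = -θ := by field_simp
      linarith
    · positivity
  have ha : 0 < a := by
    have h : a = (θ + β * t) / θ := by rw [ha_def]; field_simp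
    rw [h]; exact div_pos hθβt hθ
  have hc : (0 : ℝ) < a ^ (-1 / β) := Real.rpow_pos_of_pos ha _
  have h4 : θ + β * t = θ * a := by rw [ha_def]; field_simp
  -- hazard rate
  have hazard : ((1 / θ) * a ^ (-1 / β - 1)) / a ^ (-1 / β) = 1 / (θ + β * t) := by
    rw [Real.rpow_sub ha, Real.rpow_one, h4]
    field_simp
  refine ⟨hazard, ?_⟩
  -- pointwise rewriting of the integrand
  have key : ∀ u : ℝ, 0 ≤ u →
      (u ^ (-1 / β) / a ^ (-1 / β)) ^ 2 = u ^ (-2 / β) * ((a ^ (-1 / β)) ^ 2)⁻¹ := by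
    intro u hu
    rw [div_pow, ← Real.rpow_natCast (u ^ (-1 / β)) 2, ← Real.rpow_mul hu]
    rw [show (-1 / β) * ((2 : ℕ) : ℝ) = -2 / β by push_cast; ring, div_eq_mul_inv]
  -- the core integral
  have hI : (∫ x in (if 0 < β then Ioi t else Ioo t (-θ / β)),
      (1 + β * x / θ) ^ (-2 / β)) = θ / (2 - β) * a ^ (1 - 2 / β) := by
    rcases lt_or_gt_of_ne hβ0 with hneg | hpos
    · -- β < 0
      rw [if_neg (not_lt.mpr hneg.le)]
      have htb : t < -θ / β := ht' hneg
      have hp1 : (1 : ℝ) ≤ 1 - 2 / β := by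
        have h0 : 2 / β < 0 := div_neg_of_pos_of_neg two_pos hneg
        linarith
      have hderiv : ∀ x ∈ uIcc t (-θ / β),
          HasDerivAt (fun y => θ / (β - 2) * (1 + β * y / θ) ^ (1 - 2 / β))
            ((1 + β * x / θ) ^ (-2 / β)) x := fun x _ =>
        gpd_hasDerivAt θ β hθ.ne' hβ0 hβ2' x (Or.inr hp1)
      have hint : IntervalIntegrable (fun x => (1 + β * x / θ) ^ (-2 / β)) volume t (-θ / β) := by
        apply Continuous.intervalIntegrable
        have hexp : (0 : ℝ) ≤ -2 / β := (div_pos_of_neg_of_neg (by norm_num) hneg).le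
        exact (Real.continuous_rpow_const hexp).comp
          (by continuity : Continuous fun x : ℝ => 1 + β * x / θ)
      have hFTC := intervalIntegral.integral_eq_sub_of_hasDerivAt hderiv hint
      rw [intervalIntegral.integral_of_le htb.le, integral_Ioc_eq_integral_Ioo] at hFTC
      rw [hFTC]
      have hub : 1 + β * (-θ / β) / θ = 0 := by field_simp; ring
      rw [hub, Real.zero_rpow (by positivity : (0:ℝ) < 1 - 2/β).ne']
      rw [mul_zero, zero_sub, ← ha_def,
        show (2:ℝ) - β = -(β - 2) by ring, div_neg, neg_mul]
    · -- 0 < β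
      rw [if_pos hpos]
      have hderiv : ∀ x ∈ Ici t,
          HasDerivAt (fun y => θ / (β - 2) * (1 + β * y / θ) ^ (1 - 2 / β))
            ((1 + β * x / θ) ^ (-2 / β)) x := by
        intro x hx
        have hx0 : 0 < x := lt_of_lt_of_le ht hx
        exact gpd_hasDerivAt θ β hθ.ne' hβ0 hβ2' x (Or.inl (by positivity))
      have hpos' : ∀ x ∈ Ioi t, 0 ≤ (1 + β * x / θ) ^ (-2 / β) := by
        intro x hx
        have hx0 : 0 < x := lt_trans ht hx
        positivity
      have htend : Filter.Tendsto (fun y => θ / (β - 2) * (1 + β * y / θ) ^ (1 - 2 / β))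
          Filter.atTop (nhds 0) := by
        have h1 : Filter.Tendsto (fun y : ℝ => 1 + β * y / θ) Filter.atTop Filter.atTop := by
          apply Filter.tendsto_atTop_add_const_left
          exact (Filter.tendsto_id.const_mul_atTop hpos).atTop_div_const hθ
        have hy : (0 : ℝ) < 2 / β - 1 := by
          rw [sub_pos, lt_div_iff₀ hpos]
          linarith
        have h2 : Filter.Tendsto (fun u : ℝ => u ^ (-(2 / β - 1))) Filter.atTop (nhds 0) :=
          tendsto_rpow_neg_atTop hy
        have h3 := (h2.comp h1).const_mul (θ / (β - 2))
        rw [mul_zero] at h3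
        simp only [Function.comp] at h3
        rw [show (1:ℝ) - 2 / β = -(2 / β - 1) by ring]
        exact h3
      have := integral_Ioi_of_hasDerivAt_of_nonneg' hderiv hpos' htend
      rw [this, ← ha_def, zero_sub,
        show (2:ℝ) - β = -(β - 2) by ring, div_neg, neg_mul]
  -- rewrite the integral
  have hJ : (∫ x in (if 0 < β then Ioi t else Ioo t (-θ / β)),
        ((1 + β * x / θ) ^ (-1 / β) / a ^ (-1 / β)) ^ 2) =
      (θ / (2 - β) * a ^ (1 - 2 / β)) * ((a ^ (-1 / β)) ^ 2)⁻¹ := by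
    rw [← hI, ← integral_mul_const]
    apply setIntegral_congr_fun
    · rcases lt_or_gt_of_ne hβ0 with hneg | hpos
      · rw [if_neg (not_lt.mpr hneg.le)]; exact measurableSet_Ioo
      · rw [if_pos hpos]; exact measurableSet_Ioi
    · intro x hx
      apply key
      rcases lt_or_gt_of_ne hβ0 with hneg | hpos
      · rw [if_neg (not_lt.mpr hneg.le)] at hx
        have h2 : β * x > β * (-θ / β) := (mul_lt_mul_left_of_neg hneg).mpr hx.2
        have h3 : β * (-θ / β) = -θ := by field_simp
        have : 0 < θ + β * x := by linarith
        have h4 : 1 + β * x / θ = (θ + β * x) / θ := by field_simp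
        rw [h4]; positivity
      · rw [if_pos hpos] at hx
        have hx0 : 0 < x := lt_trans ht hx
        positivity
  rw [hJ, hazard]
  -- final algebra
  have h1 : (a ^ (-1 / β)) ^ 2 = a ^ (-2 / β) := by
    rw [← Real.rpow_natCast (a ^ (-1 / β)) 2, ← Real.rpow_mul ha.le]
    rw [show (-1 / β) * ((2 : ℕ) : ℝ) = -2 / β by push_cast; ring]
  have h2 : a ^ ((1 : ℝ) - 2 / β) = a * a ^ (-2 / β) := by
    rw [show (1 : ℝ) - 2 / β = 1 + (-2 / β) by ring, Real.rpow_add ha, Real.rpow_one]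
  rw [h1, h2, h4]
  have h3 : a ^ (-2 / β) ≠ 0 := (Real.rpow_pos_of_pos ha _).ne'
  have h2b : (2 : ℝ) - β ≠ 0 := sub_ne_zero.mpr (Ne.symm hβ2')
  rw [show θ / (2 - β) * (a * a ^ (-2 / β)) * (a ^ (-2 / β))⁻¹ = θ / (2 - β) * a from by
    rw [mul_assoc, mul_assoc, mul_inv_cancel₀ h3, mul_one]]
  field_simp
  ring
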